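/- Let A be a finite set of reals and for each integer ℓ let r(ℓ) = |{(t₁,t₂) ∈ A × A : 0 ≤ t₁ - t₂ - ℓ < 1}|. Then Σ_ℓ r(ℓ) = |A|², and Σ_ℓ r(ℓ)² is bounded above and below (up to absolute constants) by the additive energy E(A) = |{(t₁,t₂,t₃,t₄) ∈ A⁴ : |t₁ + t₂ - t₃ - t₄| ≤ 1}|; more precisely Σ_ℓ r(ℓ)² ≪ E(A) ≪ Σ_ℓ r(ℓ)². -/

import Mathlib

open Finset

namespace Stmt13Aux

noncomputable def F (A : Finset ℝ) (ℓ : ℤ) : Finset (ℝ × ℝ) :=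
  (A ×ˢ A).filter (fun p => ⌊p.1 - p.2⌋ = ℓ)

noncomputable def I (A : Finset ℝ) : Finset ℤ :=
  (A ×ˢ A).image (fun p => ⌊p.1 - p.2⌋)

noncomputable def T' (A : Finset ℝ) : Finset ((ℝ × ℝ) × (ℝ × ℝ)) :=
  ((A ×ˢ A) ×ˢ (A ×ˢ A)).filter
    (fun q => |(q.1.1 - q.1.2) - (q.2.1 - q.2.2)| ≤ 1)

noncomputable def U (A : Finset ℝ) : Finset ((ℝ × ℝ) × (ℝ × ℝ)) :=
  ((A ×ˢ A) ×ˢ (A ×ˢ A)).filter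
    (fun q => ⌊q.1.1 - q.1.2⌋ = ⌊q.2.1 - q.2.2⌋)

noncomputable def V (A : Finset ℝ) : Finset ((ℝ × ℝ) × (ℝ × ℝ)) :=
  ((A ×ˢ A) ×ˢ (A ×ˢ A)).filter
    (fun q => |⌊q.1.1 - q.1.2⌋ - ⌊q.2.1 - q.2.2⌋| ≤ 1)

noncomputable def P (A : Finset ℝ) : Finset (ℤ × ℤ) :=
  (I A ×ˢ I A).filter (fun x => |x.1 - x.2| ≤ 1)

lemma filt_eq (A : Finset ℝ) (ℓ : ℤ) :
    (A ×ˢ A).filter (fun p => 0 ≤ p.1 - p.2 - (ℓ : ℝ) ∧ p.1 - p.2 - (ℓ : ℝ) < 1) = F A ℓ := by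
  apply Finset.filter_congr
  intro p _
  rw [Int.floor_eq_iff]
  constructor <;> intro h <;> constructor <;> push_cast <;> linarith [h.1, h.2]

lemma mem_I_of_F_ne (A : Finset ℝ) (ℓ : ℤ) (h : F A ℓ ≠ ∅) : ℓ ∈ I A := by
  obtain ⟨p, hp⟩ := Finset.nonempty_iff_ne_empty.mpr h
  rw [F, Finset.mem_filter] at hp
  exact Finset.mem_image.mpr ⟨p, hp.1, hp.2⟩

lemma finsum_card (A : Finset ℝ) :
    ∑ᶠ ℓ : ℤ, ((F A ℓ).card : ℝ) = ∑ ℓ ∈ I A, ((F A ℓ).card : ℝ) := by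
  apply finsum_eq_finset_sum_of_support_subset
  intro ℓ hℓ
  simp only [Function.mem_support, ne_eq, Nat.cast_eq_zero, Finset.card_eq_zero] at hℓ
  exact mem_I_of_F_ne A ℓ hℓ

lemma finsum_card_sq (A : Finset ℝ) :
    ∑ᶠ ℓ : ℤ, ((F A ℓ).card : ℝ) ^ 2 = ∑ ℓ ∈ I A, ((F A ℓ).card : ℝ) ^ 2 := by
  apply finsum_eq_finset_sum_of_support_subset
  intro ℓ hℓ
  simp only [Function.mem_support, ne_eq] at hℓ
  apply mem_I_of_F_ne
  intro h
  exact hℓ (by simp [h])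

lemma sum_r (A : Finset ℝ) : ∑ ℓ ∈ I A, (F A ℓ).card = A.card ^ 2 := by
  rw [sq, ← Finset.card_product]
  exact (Finset.card_eq_sum_card_fiberwise
    (fun p hp => Finset.mem_image_of_mem _ hp)).symm

lemma card_T_eq (A : Finset ℝ) :
    (((A ×ˢ A) ×ˢ (A ×ˢ A)).filter
      (fun q => |q.1.1 + q.1.2 - q.2.1 - q.2.2| ≤ 1)).card = (T' A).card := by
  refine Finset.card_nbij' (fun q => ((q.1.1, q.2.1), (q.2.2, q.1.2)))
    (fun q => ((q.1.1, q.2.2), (q.1.2, q.2.1))) ?_ ?_ ?_ ?_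
  · intro q hq
    simp only [T', Finset.mem_coe, Finset.mem_filter, Finset.mem_product] at hq ⊢
    refine ⟨⟨⟨hq.1.1.1, hq.1.2.1⟩, hq.1.2.2, hq.1.1.2⟩, ?_⟩
    have h := hq.2
    have e : q.1.1 - q.2.1 - (q.2.2 - q.1.2) = q.1.1 + q.1.2 - q.2.1 - q.2.2 := by ring
    rw [e]; exact h
  · intro q hq
    simp only [T', Finset.mem_coe, Finset.mem_filter, Finset.mem_product] at hq ⊢
    refine ⟨⟨⟨hq.1.1.1, hq.1.2.2⟩, hq.1.1.2, hq.1.2.1⟩, ?_⟩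
    have h := hq.2
    have e : q.1.1 + q.2.2 - q.1.2 - q.2.1 = q.1.1 - q.1.2 - (q.2.1 - q.2.2) := by ring
    rw [e]; exact h
  · intro q hq; rfl
  · intro q hq; rfl

lemma U_subset (A : Finset ℝ) : U A ⊆ T' A := by
  intro q hq
  simp only [U, T', Finset.mem_filter] at hq ⊢
  refine ⟨hq.1, ?_⟩
  have h1 := Int.floor_le (q.1.1 - q.1.2)
  have h2 := Int.lt_floor_add_one (q.1.1 - q.1.2)
  have h3 := Int.floor_le (q.2.1 - q.2.2)
  have h4 := Int.lt_floor_add_one (q.2.1 - q.2.2)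
  rw [abs_le]
  rw [hq.2] at h1 h2
  constructor <;> linarith

lemma card_U (A : Finset ℝ) :
    (U A).card = ∑ ℓ ∈ I A, (F A ℓ).card * (F A ℓ).card := by
  rw [Finset.card_eq_sum_card_fiberwise
    (f := fun q => ⌊q.1.1 - q.1.2⌋) (t := I A) ?memb]
  · apply Finset.sum_congr rfl
    intro ℓ _
    rw [← Finset.card_product]
    congr 1
    ext q
    simp only [U, F, Finset.mem_filter, Finset.mem_product]
    constructor
    · rintro ⟨⟨⟨h1, h2⟩, h3⟩, h4⟩
      exact ⟨⟨h1, h4⟩, h2, h3 ▸ h4⟩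
    · rintro ⟨⟨h1, h4⟩, h2, h5⟩
      exact ⟨⟨⟨h1, h2⟩, h4.trans h5.symm⟩, h4⟩
  · intro q hq
    simp only [U, Finset.mem_coe, Finset.mem_filter, Finset.mem_product] at hq
    exact Finset.mem_image.mpr ⟨q.1, Finset.mem_product.mpr hq.1.1, rfl⟩

lemma T'_subset (A : Finset ℝ) : T' A ⊆ V A := by
  intro q hq
  simp only [T', V, Finset.mem_filter] at hq ⊢
  refine ⟨hq.1, ?_⟩
  set x := q.1.1 - q.1.2
  set y := q.2.1 - q.2.2
  rw [abs_le] at hq ⊢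
  have h1 : ⌊x⌋ ≤ ⌊y⌋ + 1 := by
    have : ⌊x⌋ ≤ ⌊y + 1⌋ := Int.floor_le_floor (by linarith [hq.2.2])
    rwa [Int.floor_add_one] at this
  have h2 : ⌊y⌋ ≤ ⌊x⌋ + 1 := by
    have : ⌊y⌋ ≤ ⌊x + 1⌋ := Int.floor_le_floor (by linarith [hq.2.1])
    rwa [Int.floor_add_one] at this
  omega

lemma card_V (A : Finset ℝ) :
    (V A).card = ∑ x ∈ P A, (F A x.1).card * (F A x.2).card := by
  rw [Finset.card_eq_sum_card_fiberwise
    (f := fun q => (⌊q.1.1 - q.1.2⌋, ⌊q.2.1 - q.2.2⌋)) (t := P A) ?memb]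
  · apply Finset.sum_congr rfl
    intro x hx
    simp only [P, Finset.mem_filter] at hx
    rw [← Finset.card_product]
    congr 1
    ext q
    simp only [V, F, Finset.mem_filter, Finset.mem_product, Prod.mk.injEq, Prod.ext_iff]
    constructor
    · rintro ⟨⟨⟨h1, h2⟩, h3⟩, h4, h5⟩
      exact ⟨⟨h1, h4⟩, h2, h5⟩
    · rintro ⟨⟨h1, h4⟩, h2, h5⟩
      refine ⟨⟨⟨h1, h2⟩, ?_⟩, h4, h5⟩
      rw [h4, h5]; exact hx.2
  · intro q hq
    simp only [V, Finset.mem_coe, Finset.mem_filter, Finset.mem_product] at hq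
    simp only [P, Finset.mem_coe, Finset.mem_filter, Finset.mem_product]
    exact ⟨⟨Finset.mem_image.mpr ⟨q.1, Finset.mem_product.mpr hq.1.1, rfl⟩,
      Finset.mem_image.mpr ⟨q.2, Finset.mem_product.mpr hq.1.2, rfl⟩⟩, hq.2⟩

lemma filter_card_le (s : Finset ℤ) (ℓ : ℤ) :
    (s.filter (fun m => |ℓ - m| ≤ 1)).card ≤ 3 := by
  have h : s.filter (fun m => |ℓ - m| ≤ 1) ⊆ {ℓ - 1, ℓ, ℓ + 1} := by
    intro m hm
    simp only [Finset.mem_filter] at hm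
    have := hm.2
    rw [abs_le] at this
    simp only [Finset.mem_insert, Finset.mem_singleton]
    omega
  calc (s.filter (fun m => |ℓ - m| ≤ 1)).card ≤ _ := Finset.card_le_card h
    _ ≤ 3 := Finset.card_insert_le _ _ |>.trans (by
        exact Nat.succ_le_succ (Finset.card_insert_le _ _))

lemma sum_P_fst (A : Finset ℝ) :
    ∑ x ∈ P A, ((F A x.1).card : ℝ) ^ 2 ≤ 3 * ∑ ℓ ∈ I A, ((F A ℓ).card : ℝ) ^ 2 := by
  rw [P, Finset.sum_filter, Finset.sum_product]
  rw [Finset.mul_sum]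
  apply Finset.sum_le_sum
  intro ℓ _
  rw [← Finset.sum_filter]
  calc ∑ a ∈ (I A).filter (fun a => |ℓ - a| ≤ 1), ((F A ℓ).card : ℝ) ^ 2
      = (((I A).filter (fun a => |ℓ - a| ≤ 1)).card : ℝ) * ((F A ℓ).card : ℝ) ^ 2 := by
        rw [Finset.sum_const, nsmul_eq_mul]
    _ ≤ 3 * ((F A ℓ).card : ℝ) ^ 2 := by
        apply mul_le_mul_of_nonneg_right _ (by positivity)
        exact_mod_cast filter_card_le (I A) ℓ

lemma sum_P_snd (A : Finset ℝ) :
    ∑ x ∈ P A, ((F A x.2).card : ℝ) ^ 2 ≤ 3 * ∑ ℓ ∈ I A, ((F A ℓ).card : ℝ) ^ 2 := by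
  have hswap : ∑ x ∈ P A, ((F A x.2).card : ℝ) ^ 2
      = ∑ x ∈ P A, ((F A x.1).card : ℝ) ^ 2 := by
    apply Finset.sum_nbij' (i := Prod.swap) (j := Prod.swap)
    · intro x hx
      simp only [P, Finset.mem_filter, Finset.mem_product] at hx ⊢
      exact ⟨⟨hx.1.2, hx.1.1⟩, by rw [abs_sub_comm] at hx; exact hx.2⟩
    · intro x hx
      simp only [P, Finset.mem_filter, Finset.mem_product] at hx ⊢
      exact ⟨⟨hx.1.2, hx.1.1⟩, by rw [abs_sub_comm] at hx; exact hx.2⟩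
    · intro x _; rfl
    · intro x _; rfl
    · intro x _; rfl
  rw [hswap]
  exact sum_P_fst A

lemma key (A : Finset ℝ) :
    ∑ x ∈ P A, ((F A x.1).card : ℝ) * ((F A x.2).card : ℝ)
      ≤ 3 * ∑ ℓ ∈ I A, ((F A ℓ).card : ℝ) ^ 2 := by
  have h2 : (2 : ℝ) * ∑ x ∈ P A, ((F A x.1).card : ℝ) * ((F A x.2).card : ℝ)
      ≤ 2 * (3 * ∑ ℓ ∈ I A, ((F A ℓ).card : ℝ) ^ 2) := by
    calc (2:ℝ) * ∑ x ∈ P A, ((F A x.1).card : ℝ) * ((F A x.2).card : ℝ)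
        = ∑ x ∈ P A, 2 * (((F A x.1).card : ℝ) * ((F A x.2).card : ℝ)) := by
          rw [Finset.mul_sum]
      _ ≤ ∑ x ∈ P A, (((F A x.1).card : ℝ) ^ 2 + ((F A x.2).card : ℝ) ^ 2) := by
          apply Finset.sum_le_sum
          intro x _
          nlinarith [sq_nonneg (((F A x.1).card : ℝ) - ((F A x.2).card : ℝ))]
      _ = ∑ x ∈ P A, ((F A x.1).card : ℝ) ^ 2 + ∑ x ∈ P A, ((F A x.2).card : ℝ) ^ 2 :=
          Finset.sum_add_distrib
      _ ≤ 3 * ∑ ℓ ∈ I A, ((F A ℓ).card : ℝ) ^ 2 + 3 * ∑ ℓ ∈ I A, ((F A ℓ).card : ℝ) ^ 2 :=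
          add_le_add (sum_P_fst A) (sum_P_snd A)
      _ = 2 * (3 * ∑ ℓ ∈ I A, ((F A ℓ).card : ℝ) ^ 2) := by ring
  linarith

end Stmt13Aux

open Stmt13Aux in
/-- with `r(ℓ) = |{(t₁,t₂) ∈ A² : 0 ≤ t₁-t₂-ℓ < 1}|`, one has
`Σ_ℓ r(ℓ) = |A|²`, and `Σ_ℓ r(ℓ)²` is comparable, up to absolute constants,
to the additive energy `E(A) = |{(t₁,t₂,t₃,t₄) ∈ A⁴ : |t₁+t₂-t₃-t₄| ≤ 1}|`. -/
theorem stmt_13 :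
    ∃ c₁ c₂ : ℝ, 0 < c₁ ∧ 0 < c₂ ∧
      ∀ A : Finset ℝ,
        (∑ᶠ ℓ : ℤ,
            (((A ×ˢ A).filter (fun p => 0 ≤ p.1 - p.2 - (ℓ : ℝ) ∧ p.1 - p.2 - (ℓ : ℝ) < 1)).card : ℝ))
          = (A.card : ℝ) ^ 2 ∧
        c₁ * ∑ᶠ ℓ : ℤ,
            (((A ×ˢ A).filter (fun p => 0 ≤ p.1 - p.2 - (ℓ : ℝ) ∧ p.1 - p.2 - (ℓ : ℝ) < 1)).card : ℝ) ^ 2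
          ≤ ((((A ×ˢ A) ×ˢ (A ×ˢ A)).filter
              (fun q => |q.1.1 + q.1.2 - q.2.1 - q.2.2| ≤ 1)).card : ℝ) ∧
        ((((A ×ˢ A) ×ˢ (A ×ˢ A)).filter
              (fun q => |q.1.1 + q.1.2 - q.2.1 - q.2.2| ≤ 1)).card : ℝ)
          ≤ c₂ * ∑ᶠ ℓ : ℤ,
            (((A ×ˢ A).filter (fun p => 0 ≤ p.1 - p.2 - (ℓ : ℝ) ∧ p.1 - p.2 - (ℓ : ℝ) < 1)).card : ℝ) ^ 2 := by
  refine ⟨1, 3, one_pos, by norm_num, fun A => ?_⟩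
  have hre : ∀ ℓ : ℤ,
      (((A ×ˢ A).filter (fun p => 0 ≤ p.1 - p.2 - (ℓ : ℝ) ∧ p.1 - p.2 - (ℓ : ℝ) < 1)).card : ℝ)
        = ((F A ℓ).card : ℝ) := fun ℓ => by rw [filt_eq]
  have hre2 : ∀ ℓ : ℤ,
      (((A ×ˢ A).filter (fun p => 0 ≤ p.1 - p.2 - (ℓ : ℝ) ∧ p.1 - p.2 - (ℓ : ℝ) < 1)).card : ℝ) ^ 2
        = ((F A ℓ).card : ℝ) ^ 2 := fun ℓ => by rw [filt_eq]
  rw [finsum_congr hre, finsum_congr hre2]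
  rw [finsum_card, finsum_card_sq]
  have hsumsq : ∑ ℓ ∈ I A, ((F A ℓ).card : ℝ) ^ 2 = ((U A).card : ℝ) := by
    rw [card_U]
    push_cast
    apply Finset.sum_congr rfl
    intro ℓ _
    ring
  refine ⟨?_, ?_, ?_⟩
  · rw [← Nat.cast_sum, sum_r]
    push_cast
    ring
  · rw [one_mul, hsumsq, card_T_eq]
    exact_mod_cast Finset.card_le_card (U_subset A)
  · calc ((((A ×ˢ A) ×ˢ (A ×ˢ A)).filter
        (fun q => |q.1.1 + q.1.2 - q.2.1 - q.2.2| ≤ 1)).card : ℝ)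
        = ((T' A).card : ℝ) := by exact_mod_cast card_T_eq A
      _ ≤ ((V A).card : ℝ) := by exact_mod_cast Finset.card_le_card (T'_subset A)
      _ = ∑ x ∈ P A, ((F A x.1).card : ℝ) * ((F A x.2).card : ℝ) := by
          rw [card_V]; push_cast; rfl
      _ ≤ 3 * ∑ ℓ ∈ I A, ((F A ℓ).card : ℝ) ^ 2 := key A
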